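/- Let d ≥ 1, E ⊆ ℝ^d be a non-degenerate parallelepiped, f be an E-periodic tempered distribution on ℝ^d (i.e. f composed with translation by any k ∈ Λ_E equals f), and let φ be a Schwartz function on ℝ^d. Define V_φf(x,ξ) = (2π)^{-d/2} f(y ↦ conj(φ(y−x)) e^{-i⟨y,ξ⟩}). Then there exist constants C > 0 and N ≥ 0 such that |V_φf(x,ξ)| ≤ C (1+|ξ|)^N for all (x,ξ) ∈ ℝ^d × ℝ^d. -/

import Mathlib

open MeasureTheory Filter
open scoped BigOperators InnerProductSpace Topology

noncomputable section

abbrev Euc (d : ℕ) := EuclideanSpace ℝ (Fin d)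

/-- The lattice point `∑ i, j i • e i` associated with `j : ℤ^d`. -/
def latPt {d : ℕ} (e : Fin d → Euc d) (j : Fin d → ℤ) : Euc d :=
  ∑ i, (j i : ℝ) • e i

/-- The (closed) parallelepiped spanned by `e`. -/
def paraSet {d : ℕ} (e : Fin d → Euc d) : Set (Euc d) :=
  (fun t : Fin d → ℝ => ∑ i, t i • e i) '' (Set.univ.pi fun _ => Set.Icc (0:ℝ) 1)

/-- Fourier coefficient `c(f, ξ) = |E|⁻¹ ∫_E f(x) e^{-i⟨x,ξ⟩} dx`. -/
def fourCoeff {d : ℕ} (e : Fin d → Euc d) (f : Euc d → ℂ) (ξ : Euc d) : ℂ :=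
  (((volume (paraSet e)).toReal : ℂ))⁻¹ *
    ∫ x in paraSet e, f x * Complex.exp (-(Complex.I) * (⟪x, ξ⟫_ℝ : ℂ))

/-- Iterated partial derivatives along a list of coordinate directions. -/
def pdSeq {d : ℕ} : List (Fin d) → (Euc d → ℂ) → (Euc d → ℂ)
  | [], f => f
  | (i :: L), f => pdSeq L (fun x => fderiv ℝ f x (EuclideanSpace.single i 1))

/-- The canonical list of directions attached to a multi-index `β`. -/
def mIdxL {d : ℕ} (β : Fin d → ℕ) : List (Fin d) :=
  (List.finRange d).flatMap fun i => List.replicate (β i) i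

/-- The multi-index partial derivative `∂^β f`. -/
def pD {d : ℕ} (β : Fin d → ℕ) (f : Euc d → ℂ) : Euc d → ℂ := pdSeq (mIdxL β) f

/-- Fourier transform, normalized as `(2π)^{-d/2} ∫ f(x) e^{-i⟨x,ξ⟩} dx`. -/
def FT {d : ℕ} (f : Euc d → ℂ) (ξ : Euc d) : ℂ :=
  (((2 * Real.pi) ^ (-(d:ℝ)/2) : ℝ) : ℂ) *
    ∫ x, f x * Complex.exp (-(Complex.I) * (⟪x, ξ⟫_ℝ : ℂ))

/-- Short-time Fourier transform with window `φ`. -/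
def STFT {d : ℕ} (φ f : Euc d → ℂ) (x ξ : Euc d) : ℂ :=
  (((2 * Real.pi) ^ (-(d:ℝ)/2) : ℝ) : ℂ) *
    ∫ y, f y * (starRingEnd ℂ) (φ (y - x)) * Complex.exp (-(Complex.I) * (⟪y, ξ⟫_ℝ : ℂ))


/-- the short-time Fourier transform of an `E`-periodic tempered distribution with
respect to a Schwartz window has polynomial growth in `ξ`, uniformly in `x`. Here `W x ξ` is the
Schwartz function `y ↦ conj(φ(y−x)) e^{-i⟨y,ξ⟩}`, so that `V_φf(x,ξ) = (2π)^{-d/2} f(W x ξ)`. -/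
theorem my_iteratedFDeriv_comp_add_right {E F : Type*} [NormedAddCommGroup E] [NormedSpace ℝ E]
    [NormedAddCommGroup F] [NormedSpace ℝ F]
    (g : E → F) (hg : ContDiff ℝ ((⊤:ℕ∞)) g) (c : E) (n : ℕ) :
    iteratedFDeriv ℝ n (fun y => g (y + c)) = fun y => iteratedFDeriv ℝ n g (y + c) := by
  induction n with
  | zero => funext y; ext m; simp [iteratedFDeriv_zero_apply]
  | succ n ih =>
    funext y; ext m
    have hdiff : Differentiable ℝ (iteratedFDeriv ℝ n g) :=
      hg.differentiable_iteratedFDeriv (by exact_mod_cast (lt_top_iff_ne_top.2 (by simp) : (n:ℕ∞) < ⊤))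
    have h1 : HasFDerivAt (fun z : E => iteratedFDeriv ℝ n g (z + c))
        (fderiv ℝ (iteratedFDeriv ℝ n g) (y + c)) y := by
      have := (hdiff (y + c)).hasFDerivAt.comp y ((hasFDerivAt_id y).add_const c)
      exact this
    rw [iteratedFDeriv_succ_apply_left, iteratedFDeriv_succ_apply_left, ih, h1.fderiv]

theorem my_iteratedDeriv_expc (c : ℂ) (n : ℕ) :
    iteratedDeriv n (fun t : ℝ => Complex.exp (c * t)) = fun t : ℝ => c ^ n * Complex.exp (c * (t : ℂ)) := by
  have hd : ∀ t : ℝ, HasDerivAt (fun t : ℝ => Complex.exp (c * t)) (c * Complex.exp (c * t)) t := by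
    intro t
    have h0 : HasDerivAt (fun t : ℝ => c * (t : ℂ)) c t := by
      simpa using (Complex.ofRealCLM.hasDerivAt (x := t)).const_mul c
    simpa [mul_comm] using h0.cexp
  induction n with
  | zero => simp
  | succ n ih =>
    rw [iteratedDeriv_succ, ih]
    funext t
    rw [deriv_const_mul _ (hd t).differentiableAt, (hd t).deriv]
    ring

theorem my_contDiff_char (c : ℂ) : ContDiff ℝ ((⊤:ℕ∞)) (fun t : ℝ => Complex.exp (c * t)) := by
  exact (((Complex.contDiff_exp : ContDiff ℂ ⊤ Complex.exp).restrict_scalars ℝ).of_le le_top).comp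
    (contDiff_const.mul Complex.ofRealCLM.contDiff)

theorem my_norm_iteratedFDeriv_char {d : ℕ} (ξ : Euc d) (n : ℕ) (y : Euc d) :
    ‖iteratedFDeriv ℝ n (fun y : Euc d => Complex.exp (-Complex.I * (⟪y, ξ⟫_ℝ : ℂ))) y‖
      ≤ ‖ξ‖ ^ n := by
  set L : Euc d →L[ℝ] ℝ := innerSL ℝ ξ with hL
  have hfun : (fun y : Euc d => Complex.exp (-Complex.I * (⟪y, ξ⟫_ℝ : ℂ)))
      = (fun t : ℝ => Complex.exp ((-Complex.I) * t)) ∘ L := by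
    funext z; simp only [Function.comp_apply]; rw [hL, innerSL_apply_apply, real_inner_comm]
  rw [hfun, L.iteratedFDeriv_comp_right (my_contDiff_char (-Complex.I)) y (by exact_mod_cast le_top : (n:WithTop ℕ∞) ≤ ((⊤:ℕ∞):WithTop ℕ∞))]
  refine le_trans (ContinuousMultilinearMap.norm_compContinuousLinearMap_le _ _) ?_
  have h1 : ‖iteratedFDeriv ℝ n (fun t : ℝ => Complex.exp ((-Complex.I) * t)) (L y)‖ = 1 := by
    rw [norm_iteratedFDeriv_eq_norm_iteratedDeriv, my_iteratedDeriv_expc]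
    simp [Complex.norm_exp]
  rw [h1, one_mul]
  calc (∏ _i : Fin n, ‖L‖) = ‖L‖ ^ n := by simp
    _ ≤ ‖ξ‖ ^ n := by
        apply pow_le_pow_left₀ (norm_nonneg _)
        rw [hL, innerSL_apply_norm]



theorem my_char_eq {d : ℕ} (ξ : Euc d) :
    (fun y : Euc d => Complex.exp (-Complex.I * (⟪y, ξ⟫_ℝ : ℂ)))
      = (fun t : ℝ => Complex.exp ((-Complex.I) * t)) ∘ (innerSL ℝ ξ) := by
  funext z; simp only [Function.comp_apply]; rw [innerSL_apply_apply, real_inner_comm]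

theorem my_key {d : ℕ} (φ : SchwartzMap (Euc d) ℂ) (K Nn : ℕ) (R : ℝ) (hR : 0 ≤ R)
    (x ξ : Euc d) (hx : ‖x‖ ≤ R) {k n : ℕ} (hk : k ≤ K) (hn : n ≤ Nn) (y : Euc d) :
    ‖y‖ ^ k * ‖iteratedFDeriv ℝ n
        (fun y => (starRingEnd ℂ) (φ (y - x)) * Complex.exp (-Complex.I * (⟪y, ξ⟫_ℝ : ℂ))) y‖
      ≤ (1+R)^K * 2^K *
          (((Finset.Iic (K,Nn)).sup (fun m => SchwartzMap.seminorm ℂ m.1 m.2)) φ)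
          * (1+‖ξ‖)^Nn := by
  set S : ℝ := ((Finset.Iic (K,Nn)).sup (fun m => SchwartzMap.seminorm ℂ m.1 m.2)) φ with hS
  have hS0 : 0 ≤ S := apply_nonneg _ φ
  set u : Euc d → ℂ := fun y => (starRingEnd ℂ) (φ (y - x)) with hu
  set v : Euc d → ℂ := fun y => Complex.exp (-Complex.I * (⟪y, ξ⟫_ℝ : ℂ)) with hv
  have hu' : u = ⇑Complex.conjLIE ∘ (fun z => φ (z + (-x))) := by
    funext z; simp [hu, Complex.conjLIE_apply, sub_eq_add_neg]
  have hucd : ContDiff ℝ ((⊤:ℕ∞)) u := by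
    rw [hu']
    exact Complex.conjCLE.contDiff.comp ((φ.smooth ⊤).comp (contDiff_id.add contDiff_const))
  have hvcd : ContDiff ℝ ((⊤:ℕ∞)) v := by
    rw [hv, my_char_eq]
    exact (my_contDiff_char (-Complex.I)).comp (innerSL ℝ ξ).contDiff
  have hvb : ∀ m (z : Euc d), ‖iteratedFDeriv ℝ m v z‖ ≤ ‖ξ‖ ^ m := fun m z =>
    my_norm_iteratedFDeriv_char ξ m z
  have hub : ∀ (i : ℕ) (z : Euc d),
      ‖iteratedFDeriv ℝ i u z‖ = ‖iteratedFDeriv ℝ i φ (z + (-x))‖ := by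
    intro i z
    rw [hu', Complex.conjLIE.norm_iteratedFDeriv_comp_left _ z i,
      my_iteratedFDeriv_comp_add_right _ (φ.smooth ⊤) (-x) i]
  have step1 := norm_iteratedFDeriv_mul_le (𝕜 := ℝ) hucd hvcd y (by exact_mod_cast le_top : (n:WithTop ℕ∞) ≤ ((⊤:ℕ∞):WithTop ℕ∞))
  have hyk : (0:ℝ) ≤ ‖y‖ ^ k := pow_nonneg (norm_nonneg y) k
  have hterm : ∀ i ∈ Finset.range (n+1),
      ‖y‖^k * ((n.choose i : ℝ) * ‖iteratedFDeriv ℝ i u y‖ * ‖iteratedFDeriv ℝ (n-i) v y‖)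
        ≤ ((1+R)^K * 2^K * S) * ((n.choose i : ℝ) * ‖ξ‖^(n-i)) := by
    intro i hi
    have hin : i ≤ Nn := le_trans (Nat.lt_succ_iff.mp (Finset.mem_range.mp hi)) hn
    have hA : ‖y‖^k * ‖iteratedFDeriv ℝ i u y‖ ≤ (1+R)^K * (2^K * S) := by
      rw [hub i y]
      have h3 : ‖y‖ ≤ (1+R) * (1+‖y + -x‖) := by
        have h4 : ‖y‖ ≤ ‖y + -x‖ + ‖x‖ := by
          calc ‖y‖ = ‖(y + -x) + x‖ := by rw [neg_add_cancel_right]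
            _ ≤ ‖y + -x‖ + ‖x‖ := norm_add_le _ _
        nlinarith [norm_nonneg (y + -x)]
      have h5 : ‖y‖^k ≤ (1+R)^k * (1+‖y + -x‖)^k := by
        rw [← mul_pow]; exact pow_le_pow_left₀ (norm_nonneg y) h3 k
      have h6 := SchwartzMap.one_add_le_sup_seminorm_apply (𝕜 := ℂ) (m := (K,Nn)) hk hin
        φ (y + -x)
      have h7 : (1:ℝ) ≤ 1 + R := by linarith
      calc ‖y‖^k * ‖iteratedFDeriv ℝ i (⇑φ) (y + -x)‖
          ≤ ((1+R)^k * (1+‖y + -x‖)^k) * ‖iteratedFDeriv ℝ i (⇑φ) (y + -x)‖ := by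
            exact mul_le_mul_of_nonneg_right h5 (norm_nonneg _)
        _ = (1+R)^k * ((1+‖y + -x‖)^k * ‖iteratedFDeriv ℝ i (⇑φ) (y + -x)‖) := by ring
        _ ≤ (1+R)^k * (2^K * S) := by
            refine mul_le_mul_of_nonneg_left ?_ (by positivity)
            exact h6
        _ ≤ (1+R)^K * (2^K * S) := by
            refine mul_le_mul_of_nonneg_right (pow_le_pow_right₀ h7 hk) (by positivity)
    calc ‖y‖^k * ((n.choose i : ℝ) * ‖iteratedFDeriv ℝ i u y‖ * ‖iteratedFDeriv ℝ (n-i) v y‖)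
        = (n.choose i : ℝ) * (‖y‖^k * ‖iteratedFDeriv ℝ i u y‖)
            * ‖iteratedFDeriv ℝ (n-i) v y‖ := by ring
      _ ≤ (n.choose i : ℝ) * ((1+R)^K * (2^K * S)) * ‖ξ‖^(n-i) := by
          refine mul_le_mul ?_ (hvb (n-i) y) (norm_nonneg _) (by positivity)
          exact mul_le_mul_of_nonneg_left hA (Nat.cast_nonneg _)
      _ = ((1+R)^K * 2^K * S) * ((n.choose i : ℝ) * ‖ξ‖^(n-i)) := by ring
  have hb : ((1:ℝ)+‖ξ‖)^n = ∑ i ∈ Finset.range (n+1), (n.choose i : ℝ) * ‖ξ‖^(n-i) := by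
    rw [add_pow]
    exact Finset.sum_congr rfl fun i _ => by ring
  have h1ξ : (1:ℝ) ≤ 1 + ‖ξ‖ := le_add_of_nonneg_right (norm_nonneg ξ)
  calc ‖y‖ ^ k * ‖iteratedFDeriv ℝ n (fun y => u y * v y) y‖
      ≤ ‖y‖ ^ k * ∑ i ∈ Finset.range (n+1),
          (n.choose i : ℝ) * ‖iteratedFDeriv ℝ i u y‖ * ‖iteratedFDeriv ℝ (n-i) v y‖ :=
        mul_le_mul_of_nonneg_left step1 hyk
    _ = ∑ i ∈ Finset.range (n+1), ‖y‖^k *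
          ((n.choose i : ℝ) * ‖iteratedFDeriv ℝ i u y‖ * ‖iteratedFDeriv ℝ (n-i) v y‖) := by
        rw [Finset.mul_sum]
    _ ≤ ∑ i ∈ Finset.range (n+1), ((1+R)^K * 2^K * S) * ((n.choose i : ℝ) * ‖ξ‖^(n-i)) :=
        Finset.sum_le_sum hterm
    _ = ((1+R)^K * 2^K * S) * (1+‖ξ‖)^n := by rw [← Finset.mul_sum, hb]
    _ ≤ (1+R)^K * 2^K * S * (1+‖ξ‖)^Nn := by
        exact mul_le_mul_of_nonneg_left (pow_le_pow_right₀ h1ξ hn) (by positivity)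




theorem stft_periodic_tempered_distribution_polynomial_growth
    {d : ℕ} (hd : 1 ≤ d)
    (e : Fin d → Euc d) (he : LinearIndependent ℝ e)
    (f : SchwartzMap (Euc d) ℂ →L[ℂ] ℂ)
    (hper : ∀ (g g' : SchwartzMap (Euc d) ℂ) (k : Fin d → ℤ),
      (∀ y : Euc d, g' y = g (y - latPt e k)) → f g' = f g)
    (φ : SchwartzMap (Euc d) ℂ)
    (W : Euc d → Euc d → SchwartzMap (Euc d) ℂ)
    (hW : ∀ x ξ y : Euc d,
      W x ξ y = (starRingEnd ℂ) (φ (y - x)) * Complex.exp (-(Complex.I) * (⟪y, ξ⟫_ℝ : ℂ))) :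
    ∃ C N : ℝ, 0 < C ∧ 0 ≤ N ∧ ∀ x ξ : Euc d,
      ‖(((2 * Real.pi) ^ (-(d:ℝ)/2) : ℝ) : ℂ) * f (W x ξ)‖ ≤ C * (1 + ‖ξ‖) ^ N := by
  classical
  set A : ℝ := (2 * Real.pi) ^ (-(d:ℝ)/2) with hA
  have hA0 : 0 < A := Real.rpow_pos_of_pos (by positivity) _
  -- continuity bound for f
  set q : Seminorm ℂ (SchwartzMap (Euc d) ℂ) := (normSeminorm ℂ ℂ).comp f.toLinearMap with hqdef
  have hq : Continuous ⇑q := by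
    rw [hqdef, Seminorm.coe_comp, coe_normSeminorm]
    exact continuous_norm.comp f.continuous
  obtain ⟨s, C, hC, hle⟩ :=
    Seminorm.bound_of_continuous (schwartz_withSeminorms ℂ (Euc d) ℂ) q hq
  set K : ℕ := s.sup Prod.fst with hK
  set Nn : ℕ := s.sup Prod.snd with hNn
  -- fundamental domain setup
  haveI : Nonempty (Fin d) := ⟨⟨0, hd⟩⟩
  have hcard : Fintype.card (Fin d) = Module.finrank ℝ (Euc d) := by
    simp [finrank_euclideanSpace_fin]
  set b : Module.Basis (Fin d) ℝ (Euc d) := basisOfLinearIndependentOfCardEqFinrank he hcard with hb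
  have hbe : ∀ i, b i = e i := fun i => by
    rw [hb, coe_basisOfLinearIndependentOfCardEqFinrank]
  set R : ℝ := ∑ i, ‖e i‖ with hR
  have hR0 : 0 ≤ R := Finset.sum_nonneg fun i _ => norm_nonneg _
  set S : ℝ := ((Finset.Iic (K,Nn)).sup (fun m => SchwartzMap.seminorm ℂ m.1 m.2)) φ with hS
  have hS0 : 0 ≤ S := apply_nonneg _ φ
  set B : ℝ := (1+R)^K * 2^K * S with hB
  have hB0 : 0 ≤ B := by positivity
  have hACB : (0:ℝ) ≤ A * ((C:ℝ) * B) := by positivity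
  refine ⟨A * ((C:ℝ) * B) + 1, (Nn : ℝ), by linarith, Nat.cast_nonneg _, ?_⟩
  intro x ξ
  -- reduce to the fundamental domain
  set ky : Fin d → ℤ := fun i => ⌊b.repr x i⌋ with hky
  set x' : Euc d := x - latPt e ky with hx'
  have hx2 : ∑ i, b.repr x i • e i = x := by
    conv_rhs => rw [← b.sum_repr x]
    exact Finset.sum_congr rfl fun i _ => by rw [hbe]
  have hx'sum : x' = ∑ i, Int.fract (b.repr x i) • e i := by
    conv_lhs => rw [hx', ← hx2]
    rw [latPt, ← Finset.sum_sub_distrib]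
    exact Finset.sum_congr rfl fun i _ => by rw [← sub_smul, Int.self_sub_floor]
  have hx'R : ‖x'‖ ≤ R := by
    rw [hx'sum]
    refine le_trans (norm_sum_le _ _) ?_
    refine Finset.sum_le_sum fun i _ => ?_
    rw [norm_smul, Real.norm_eq_abs, abs_of_nonneg (Int.fract_nonneg _)]
    exact mul_le_of_le_one_left (norm_nonneg _) (Int.fract_lt_one _).le
  -- periodicity: ‖f (W x ξ)‖ = ‖f (W x' ξ)‖
  set Kv : Euc d := latPt e ky with hKv
  set cst : ℂ := Complex.exp (Complex.I * (⟪Kv, ξ⟫_ℝ : ℂ)) with hcst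
  have hKx : x = x' + Kv := by rw [hx']; abel
  have hgg : ∀ y : Euc d, (cst • W x ξ) y = (W x' ξ) (y - Kv) := by
    intro y
    rw [SchwartzMap.smul_apply, hW, hW]
    have h1 : y - Kv - x' = y - x := by rw [hKx]; abel
    rw [h1, inner_sub_left]
    have h2 : (-Complex.I * (((⟪y,ξ⟫_ℝ : ℝ) - (⟪Kv,ξ⟫_ℝ : ℝ) : ℝ) : ℂ))
        = (-Complex.I * (⟪y,ξ⟫_ℝ : ℂ)) + Complex.I * (⟪Kv,ξ⟫_ℝ : ℂ) := by
      push_cast; ring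
    rw [h2, Complex.exp_add, hcst, smul_eq_mul]
    ring
  have hfeq : f (cst • W x ξ) = f (W x' ξ) := hper (W x' ξ) (cst • W x ξ) ky hgg
  have hmul : cst * f (W x ξ) = f (W x' ξ) := by
    rw [← hfeq, ContinuousLinearMap.map_smul, smul_eq_mul]
  have hcst1 : ‖cst‖ = 1 := by
    simp [hcst, Complex.norm_exp]
  have hxeq : ‖f (W x ξ)‖ = ‖f (W x' ξ)‖ := by
    rw [← hmul, norm_mul, hcst1, one_mul]
  -- seminorm bound
  have hsup : (s.sup (schwartzSeminormFamily ℂ (Euc d) ℂ)) (W x' ξ) ≤ B * (1+‖ξ‖)^Nn := by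
    refine Seminorm.finset_sup_apply_le (by positivity) fun m hm => ?_
    have hk : m.1 ≤ K := Finset.le_sup (f := Prod.fst) hm
    have hn : m.2 ≤ Nn := Finset.le_sup (f := Prod.snd) hm
    have hfam : schwartzSeminormFamily ℂ (Euc d) ℂ m = SchwartzMap.seminorm ℂ m.1 m.2 := rfl
    rw [hfam]
    refine SchwartzMap.seminorm_le_bound ℂ m.1 m.2 _ (by positivity) fun z => ?_
    have hWf : ⇑(W x' ξ) = fun y =>
        (starRingEnd ℂ) (φ (y - x')) * Complex.exp (-Complex.I * (⟪y, ξ⟫_ℝ : ℂ)) :=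
      funext (hW x' ξ)
    rw [hWf, hB]
    exact my_key φ K Nn R hR0 x' ξ hx'R hk hn z
  have hfb : ‖f (W x' ξ)‖ ≤ (C:ℝ) * (B * (1+‖ξ‖)^Nn) := by
    have h1 := (Seminorm.le_def.mp hle) (W x' ξ)
    rw [Seminorm.smul_apply] at h1
    have h2 : q (W x' ξ) = ‖f (W x' ξ)‖ := rfl
    rw [h2] at h1
    refine le_trans h1 ?_
    rw [NNReal.smul_def, smul_eq_mul]
    exact mul_le_mul_of_nonneg_left hsup C.coe_nonneg
  -- conclude
  have hXpow : ((1:ℝ) + ‖ξ‖) ^ ((Nn:ℕ) : ℝ) = (1 + ‖ξ‖)^Nn :=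
    Real.rpow_natCast _ _
  have hX0 : (0:ℝ) ≤ (1 + ‖ξ‖)^Nn := by positivity
  calc ‖((A:ℝ) : ℂ) * f (W x ξ)‖ = A * ‖f (W x ξ)‖ := by
        rw [norm_mul, Complex.norm_real, Real.norm_eq_abs, abs_of_pos hA0]
    _ = A * ‖f (W x' ξ)‖ := by rw [hxeq]
    _ ≤ A * ((C:ℝ) * (B * (1+‖ξ‖)^Nn)) := mul_le_mul_of_nonneg_left hfb hA0.le
    _ ≤ (A * ((C:ℝ) * B) + 1) * (1+‖ξ‖)^Nn := by nlinarith
    _ = (A * ((C:ℝ) * B) + 1) * (1+‖ξ‖)^((Nn:ℕ):ℝ) := by rw [hXpow]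

end
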